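/- Local exactness of the lowest-order 2D Adini complex at the 1-form space: Let curl f := (−∂_y f, ∂_x f), let S⁰ := {f ∈ ℝ[x,y] : deg f ≤ 3} + span{x³y, xy³}, and let S¹ := {(p,q) ∈ ℝ[x,y]² : deg p ≤ 2 and deg q ≤ 2} + span{curl(x³y), curl(xy³)}. Then (i) {u ∈ S¹ : ∂_x u₁ + ∂_y u₂ = 0} = {curl φ : φ ∈ S⁰}, and (ii) {∂_x u₁ + ∂_y u₂ : u ∈ S¹} = {f ∈ ℝ[x,y] : deg f ≤ 1}. -/

import Mathlib

open MvPolynomial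

noncomputable section

/-- Polynomials in two variables `x, y` over `ℝ`. -/
abbrev M2 : Type := MvPolynomial (Fin 2) ℝ

def x : M2 := X 0
def y : M2 := X 1

/-- The 2D curl of a scalar polynomial: `curl f = (−∂_y f, ∂_x f)`. -/
def curl2 (f : M2) : Fin 2 → M2 := ![-(pderiv 1 f), pderiv 0 f]

/-- The divergence of a polynomial vector field. -/
def div2 (u : Fin 2 → M2) : M2 := pderiv 0 (u 0) + pderiv 1 (u 1)

/-- The lowest-order 2D Adini 0-form shape space `S⁰ := P₃ + span{x³y, xy³}`. -/
def S0 : Submodule ℝ M2 :=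
  restrictTotalDegree (Fin 2) ℝ 3 ⊔ Submodule.span ℝ {x ^ 3 * y, x * y ^ 3}

/-- The lowest-order 2D Adini 1-form shape space
`S¹ := [P₂]² + span{curl(x³y), curl(xy³)}`. -/
def S1 : Submodule ℝ (Fin 2 → M2) :=
  (Submodule.pi Set.univ fun _ => restrictTotalDegree (Fin 2) ℝ 2) ⊔
    Submodule.span ℝ {curl2 (x ^ 3 * y), curl2 (x * y ^ 3)}

/-! ### Auxiliary toolkit: polynomial antiderivatives and degree estimates -/

/-- Integration with respect to the `i`-th variable, as a linear map on monomials. -/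
def intV (i : Fin 2) : M2 →ₗ[ℝ] M2 :=
  (basisMonomials (Fin 2) ℝ).constr ℝ fun m =>
    monomial (m + Finsupp.single i 1) (((m i : ℝ) + 1)⁻¹)

lemma intV_monomial (i : Fin 2) (m : Fin 2 →₀ ℕ) (c : ℝ) :
    intV i (monomial m c) = monomial (m + Finsupp.single i 1) (((m i : ℝ) + 1)⁻¹ * c) := by
  have h : (monomial m c : M2) = c • (basisMonomials (Fin 2) ℝ) m := by
    simp [coe_basisMonomials, smul_monomial]
  rw [h, map_smul, intV, Module.Basis.constr_basis, smul_monomial, smul_eq_mul, mul_comm]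

lemma pderiv_intV_self (i : Fin 2) (p : M2) : pderiv i (intV i p) = p := by
  induction p using MvPolynomial.induction_on' with
  | monomial m c =>
    rw [intV_monomial, pderiv_monomial]
    have h2 : m + Finsupp.single i 1 - Finsupp.single i 1 = m := add_tsub_cancel_right _ _
    have h1 : ((m + Finsupp.single i 1 : Fin 2 →₀ ℕ)) i = m i + 1 := by
      simp [Finsupp.add_apply]
    rw [h1, h2]
    have hne : ((m i : ℝ) + 1) ≠ 0 := by positivity
    congr 1
    push_cast
    field_simp
  | add p q hp hq => rw [map_add, map_add, hp, hq]

lemma pderiv_intV_ne {i j : Fin 2} (h : j ≠ i) (p : M2) :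
    pderiv j (intV i p) = intV i (pderiv j p) := by
  induction p using MvPolynomial.induction_on' with
  | monomial m c =>
    rw [intV_monomial, pderiv_monomial, pderiv_monomial, intV_monomial]
    have e1 : ((m + Finsupp.single i 1 : Fin 2 →₀ ℕ)) j = m j := by
      simp [Finsupp.add_apply, Finsupp.single_apply, h.symm]
    have e2 : ((m - Finsupp.single j 1 : Fin 2 →₀ ℕ)) i = m i := by
      simp [Finsupp.tsub_apply, Finsupp.single_apply, h]
    have e3 : m + Finsupp.single i 1 - Finsupp.single j 1
        = m - Finsupp.single j 1 + Finsupp.single i 1 := by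
      ext a
      simp only [Finsupp.add_apply, Finsupp.tsub_apply, Finsupp.single_apply]
      split_ifs with h1 h2
      · exact absurd (h2.trans h1.symm) h
      all_goals omega
    rw [e1, e2, e3]
    congr 1
    ring
  | add p q hp hq => simp [map_add, hp, hq]

/-- The projection keeping only the monomials not containing the first variable. -/
def pr0 : M2 →ₗ[ℝ] M2 :=
  (basisMonomials (Fin 2) ℝ).constr ℝ fun m =>
    if m 0 = 0 then monomial m 1 else 0

lemma pr0_monomial (m : Fin 2 →₀ ℕ) (c : ℝ) :
    pr0 (monomial m c) = if m 0 = 0 then monomial m c else 0 := by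
  have h : (monomial m c : M2) = c • (basisMonomials (Fin 2) ℝ) m := by
    simp [coe_basisMonomials, smul_monomial]
  rw [h, map_smul, pr0, Module.Basis.constr_basis]
  split <;> simp [smul_monomial]

lemma pderiv0_pr0 (p : M2) : pderiv 0 (pr0 p) = 0 := by
  induction p using MvPolynomial.induction_on' with
  | monomial m c =>
    by_cases h : m 0 = 0
    · rw [pr0_monomial, if_pos h, pderiv_monomial, h]
      simp
    · rw [pr0_monomial, if_neg h, map_zero]
  | add p q hp hq => rw [map_add, map_add, hp, hq, add_zero]

lemma intV_pderiv0 (p : M2) : intV 0 (pderiv 0 p) = p - pr0 p := by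
  induction p using MvPolynomial.induction_on' with
  | monomial m c =>
    rw [pderiv_monomial, intV_monomial, pr0_monomial]
    by_cases h : m 0 = 0
    · rw [if_pos h, h]
      simp
    · rw [if_neg h]
      have e2 : ((m - Finsupp.single 0 1 : Fin 2 →₀ ℕ)) 0 = m 0 - 1 := by
        simp [Finsupp.tsub_apply]
      have e3 : m - Finsupp.single 0 1 + Finsupp.single 0 1 = m := by
        ext a
        simp only [Finsupp.add_apply, Finsupp.tsub_apply, Finsupp.single_apply]
        split_ifs with h1
        · subst h1; omega
        · omega
      rw [e2, e3, sub_zero]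
      congr 1
      have h1 : 1 ≤ m 0 := Nat.one_le_iff_ne_zero.mpr h
      have hc : ((m 0 - 1 : ℕ) : ℝ) = (m 0 : ℝ) - 1 := by
        push_cast [h1]; ring
      rw [hc]
      have hm : ((m 0 : ℝ)) ≠ 0 := by exact_mod_cast h
      field_simp
      rw [sub_add_cancel, mul_div_cancel_left₀ _ hm]
  | add p q hp hq => rw [map_add, map_add, hp, hq, map_add]; ring

lemma fsum_eq (m : Fin 2 →₀ ℕ) : (m.sum fun _ e => e) = m 0 + m 1 := by
  rw [Finsupp.sum_fintype]
  · simp [Fin.sum_univ_two]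
  · intro i; rfl

lemma fsum_eq' (m : Fin 2 →₀ ℕ) : (m.sum fun _ => (id : ℕ → ℕ)) = m 0 + m 1 :=
  fsum_eq m

lemma totalDegree_intV_le (i : Fin 2) (p : M2) :
    (intV i p).totalDegree ≤ p.totalDegree + 1 := by
  conv_lhs => rw [p.as_sum, map_sum]
  refine (totalDegree_finset_sum _ _).trans (Finset.sup_le fun m hm => ?_)
  rw [intV_monomial]
  refine (totalDegree_monomial_le _ _).trans ?_
  have h1 := le_totalDegree hm
  rw [fsum_eq] at h1
  rw [fsum_eq']
  simp only [Finsupp.add_apply, Finsupp.single_apply]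
  fin_cases i <;> simp <;> omega

lemma totalDegree_pr0_le (p : M2) : (pr0 p).totalDegree ≤ p.totalDegree := by
  conv_lhs => rw [p.as_sum, map_sum]
  refine (totalDegree_finset_sum _ _).trans (Finset.sup_le fun m hm => ?_)
  rw [pr0_monomial]
  split_ifs
  · exact (totalDegree_monomial_le _ _).trans (le_totalDegree hm)
  · simp

lemma totalDegree_pderiv_le' (i : Fin 2) (p : M2) {n : ℕ} (h : p.totalDegree ≤ n + 1) :
    (pderiv i p).totalDegree ≤ n := by
  conv_lhs => rw [p.as_sum, map_sum]
  refine (totalDegree_finset_sum _ _).trans (Finset.sup_le fun m hm => ?_)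
  rw [pderiv_monomial]
  by_cases h0 : m i = 0
  · simp [h0]
  · refine (totalDegree_monomial_le _ _).trans ?_
    have h1 := (le_totalDegree hm).trans h
    rw [fsum_eq] at h1
    rw [fsum_eq']
    simp only [Finsupp.tsub_apply, Finsupp.single_apply]
    fin_cases i <;> simp at h0 ⊢ <;> omega

lemma pderiv_comm2 (p : M2) : pderiv 0 (pderiv 1 p) = pderiv 1 (pderiv 0 p) := by
  induction p using MvPolynomial.induction_on' with
  | monomial m c =>
    simp only [pderiv_monomial]
    have e1 : ((m - Finsupp.single 1 1 : Fin 2 →₀ ℕ)) 0 = m 0 := by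
      simp [Finsupp.tsub_apply]
    have e2 : ((m - Finsupp.single 0 1 : Fin 2 →₀ ℕ)) 1 = m 1 := by
      simp [Finsupp.tsub_apply]
    have e3 : m - Finsupp.single 1 1 - Finsupp.single 0 1
        = m - Finsupp.single 0 1 - Finsupp.single 1 1 := by
      ext a
      simp only [Finsupp.tsub_apply]
      omega
    rw [e1, e2, e3]
    congr 1
    ring
  | add p q hp hq => rw [map_add, map_add, hp, hq, map_add, map_add]

lemma div2_curl2 (f : M2) : div2 (curl2 f) = 0 := by
  simp [div2, curl2, pderiv_comm2]

lemma curl2_add (f g : M2) : curl2 (f + g) = curl2 f + curl2 g := by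
  funext i
  fin_cases i <;> simp [curl2, map_add] <;> ring

lemma curl2_smul (a : ℝ) (f : M2) : curl2 (a • f) = a • curl2 f := by
  funext i
  fin_cases i <;> simp [curl2, map_smul]

lemma div2_add (u v : Fin 2 → M2) : div2 (u + v) = div2 u + div2 v := by
  simp [div2, map_add]
  ring

lemma div2_smul (a : ℝ) (u : Fin 2 → M2) : div2 (a • u) = a • div2 u := by
  simp [div2, map_smul, smul_add]

/-- Local exactness of the lowest-order 2D Adini complex at the 1-form space:
the divergence-free fields in `S¹` are exactly the curls of potentials in
`S⁰`, and the divergence maps `S¹` onto the polynomials of total degree at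
most 1. -/
theorem adini_complex_local_exactness :
    ({u : Fin 2 → M2 | u ∈ S1 ∧ div2 u = 0} =
      {u : Fin 2 → M2 | ∃ φ ∈ S0, u = curl2 φ}) ∧
    ({p : M2 | ∃ u ∈ S1, p = div2 u} = {p : M2 | p.totalDegree ≤ 1}) := by
  constructor
  · ext u
    simp only [Set.mem_setOf_eq]
    constructor
    · rintro ⟨hu, hdiv⟩
      obtain ⟨v, hv, w, hw, rfl⟩ := Submodule.mem_sup.mp hu
      obtain ⟨a, b, rfl⟩ := Submodule.mem_span_pair.mp hw
      have hdw : div2 (a • curl2 (x ^ 3 * y) + b • curl2 (x * y ^ 3)) = 0 := by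
        rw [div2_add, div2_smul, div2_smul, div2_curl2, div2_curl2, smul_zero, smul_zero,
          add_zero]
      have hdv : div2 v = 0 := by
        rw [div2_add, hdw, add_zero] at hdiv
        exact hdiv
      set p : M2 := v 0 with hp
      set q : M2 := v 1 with hq
      have hpm : p ∈ restrictTotalDegree (Fin 2) ℝ 2 := Submodule.mem_pi.mp hv 0 trivial
      have hqm : q ∈ restrictTotalDegree (Fin 2) ℝ 2 := Submodule.mem_pi.mp hv 1 trivial
      have hdv' : pderiv 0 p + pderiv 1 q = 0 := hdv
      set φ₀ : M2 := intV 0 q - intV 1 (pr0 p) with hφ₀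
      have hx : pderiv 0 φ₀ = q := by
        rw [hφ₀, map_sub, pderiv_intV_self, pderiv_intV_ne (by decide), pderiv0_pr0,
          map_zero, sub_zero]
      have hy : pderiv 1 φ₀ = -p := by
        rw [hφ₀, map_sub, pderiv_intV_self, pderiv_intV_ne (by decide)]
        have h1q : pderiv 1 q = -(pderiv 0 p) := by linear_combination hdv'
        rw [h1q, map_neg, intV_pderiv0]
        ring
      have hcurl : curl2 φ₀ = v := by
        funext i
        fin_cases i
        · show -(pderiv 1 φ₀) = v 0
          rw [hy, neg_neg]
        · show pderiv 0 φ₀ = v 1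
          rw [hx]
      refine ⟨φ₀ + (a • (x ^ 3 * y) + b • (x * y ^ 3)), ?_, ?_⟩
      · refine Submodule.add_mem _ (Submodule.mem_sup_left ?_) (Submodule.mem_sup_right ?_)
        · rw [mem_restrictTotalDegree]
          refine (totalDegree_sub _ _).trans (max_le ?_ ?_)
          · exact (totalDegree_intV_le _ _).trans
              (by have := (mem_restrictTotalDegree _ _ _).mp hqm; omega)
          · refine (totalDegree_intV_le _ _).trans ?_
            have := (totalDegree_pr0_le p).trans ((mem_restrictTotalDegree _ _ _).mp hpm)
            omega
        · exact Submodule.mem_span_pair.mpr ⟨a, b, rfl⟩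
      · rw [curl2_add, curl2_add, curl2_smul, curl2_smul, hcurl]
    · rintro ⟨φ, hφ, rfl⟩
      refine ⟨?_, div2_curl2 φ⟩
      obtain ⟨g, hg, w, hw, rfl⟩ := Submodule.mem_sup.mp hφ
      obtain ⟨a, b, rfl⟩ := Submodule.mem_span_pair.mp hw
      rw [curl2_add, curl2_add, curl2_smul, curl2_smul]
      refine Submodule.add_mem _ (Submodule.mem_sup_left ?_) (Submodule.mem_sup_right ?_)
      · rw [Submodule.mem_pi]
        intro i _
        have hg3 := (mem_restrictTotalDegree _ _ _).mp hg
        fin_cases i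
        · show -(pderiv 1 g) ∈ _
          rw [mem_restrictTotalDegree, totalDegree_neg]
          exact totalDegree_pderiv_le' _ _ hg3
        · show pderiv 0 g ∈ _
          rw [mem_restrictTotalDegree]
          exact totalDegree_pderiv_le' _ _ hg3
      · exact Submodule.mem_span_pair.mpr ⟨a, b, rfl⟩
  · ext r
    simp only [Set.mem_setOf_eq]
    constructor
    · rintro ⟨u, hu, rfl⟩
      obtain ⟨v, hv, w, hw, rfl⟩ := Submodule.mem_sup.mp hu
      obtain ⟨a, b, rfl⟩ := Submodule.mem_span_pair.mp hw
      have hdw : div2 (a • curl2 (x ^ 3 * y) + b • curl2 (x * y ^ 3)) = 0 := by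
        rw [div2_add, div2_smul, div2_smul, div2_curl2, div2_curl2, smul_zero, smul_zero,
          add_zero]
      rw [div2_add, hdw, add_zero]
      have h0 := (mem_restrictTotalDegree _ _ _).mp (Submodule.mem_pi.mp hv 0 trivial)
      have h1 := (mem_restrictTotalDegree _ _ _).mp (Submodule.mem_pi.mp hv 1 trivial)
      exact (totalDegree_add _ _).trans
        (max_le (totalDegree_pderiv_le' _ _ h0) (totalDegree_pderiv_le' _ _ h1))
    · intro hr
      refine ⟨![intV 0 r, 0], Submodule.mem_sup_left ?_, ?_⟩
      · rw [Submodule.mem_pi]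
        intro i _
        fin_cases i
        · show intV 0 r ∈ _
          rw [mem_restrictTotalDegree]
          exact (totalDegree_intV_le _ _).trans (by omega)
        · show (0 : M2) ∈ _
          exact Submodule.zero_mem _
      · show r = div2 ![intV 0 r, 0]
        simp [div2, pderiv_intV_self]

end
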